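/- Let T be the class of decision stumps on ℝ^ℓ with threshold-split rules, i.e., classifiers of the form x ↦ sign-based routing on [x_i ≤ θ] for some i ∈ [ℓ], θ ∈ ℝ, with two labeled leaves. Then for any m points in ℝ^ℓ, the number of distinct 2-partitions realizable by stumps is at most (1/2) · Σ_{k=1}^{m−1} min{2ℓ, C(m,k)}. -/

import Mathlib

set_option maxHeartbeats 1000000


open scoped Classical

private lemma card_le_of_rel_unique {α β : Type*} [Fintype β] (s : Finset α) (R : α → β → Prop)
    (hex : ∀ a ∈ s, ∃ b, R a b)
    (huniq : ∀ a ∈ s, ∀ a' ∈ s, ∀ b, R a b → R a' b → a = a') :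
    s.card ≤ Fintype.card β := by
  classical
  choose f hf using hex
  rw [← Finset.card_attach]
  calc s.attach.card ≤ (Finset.univ : Finset β).card := by
        refine Finset.card_le_card_of_injOn (fun a => f a.1 a.2) (fun a _ => Finset.mem_univ _) ?_
        intro a _ a' _ h
        simp only at h
        refine Subtype.ext (huniq a.1 a.2 a'.1 a'.2 (f a.1 a.2) (hf a.1 a.2) ?_)
        rw [h]
        exact hf a'.1 a'.2
    _ = Fintype.card β := Finset.card_univ

/-- Upper bound on the number of distinct 2-partitions of any `m`-point sample in `ℝ^ℓ`
realizable by threshold-split decision stumps: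
`#partitions ≤ (1/2)·Σ_{k=1}^{m−1} min{2ℓ, C(m,k)}` (stated multiplied by 2). -/
theorem stump_two_partition_bound (ℓ m : ℕ) (S : Finset (Fin ℓ → ℝ)) (hS : S.card = m) :
    2 * Set.ncard {P : Finset (Finset (Fin ℓ → ℝ)) |
        ∃ (i : Fin ℓ) (θ : ℝ),
          (S.filter (fun x => x i ≤ θ)).Nonempty ∧
          (S.filter (fun x => ¬ x i ≤ θ)).Nonempty ∧
          P = {S.filter (fun x => x i ≤ θ), S.filter (fun x => ¬ x i ≤ θ)}} ≤
      ∑ k ∈ Finset.Icc 1 (m - 1), min (2 * ℓ) (m.choose k) := by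
  classical
  -- the finset of "good" cut sets
  set Good : Finset (Finset (Fin ℓ → ℝ)) :=
    S.powerset.filter (fun A => A.Nonempty ∧ (S \ A).Nonempty ∧
      ∃ (i : Fin ℓ) (θ : ℝ), A = S.filter (fun x => x i ≤ θ) ∨
        A = S.filter (fun x => ¬ x i ≤ θ)) with hGoodDef
  have memGood : ∀ A, A ∈ Good ↔ A ⊆ S ∧ A.Nonempty ∧ (S \ A).Nonempty ∧
      ∃ (i : Fin ℓ) (θ : ℝ), A = S.filter (fun x => x i ≤ θ) ∨
        A = S.filter (fun x => ¬ x i ≤ θ) := by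
    intro A
    simp [hGoodDef, Finset.mem_filter, Finset.mem_powerset, and_assoc]
  have hcompl : ∀ (i : Fin ℓ) (θ : ℝ),
      S \ S.filter (fun x => x i ≤ θ) = S.filter (fun x => ¬ x i ≤ θ) :=
    fun i θ => (Finset.filter_not _ _).symm
  set PartF : Finset (Finset (Finset (Fin ℓ → ℝ))) :=
    Good.image (fun A => ({A, S \ A} : Finset (Finset (Fin ℓ → ℝ)))) with hPartF
  -- the set of partitions is exactly ↑PartF
  have hset : {P : Finset (Finset (Fin ℓ → ℝ)) |
        ∃ (i : Fin ℓ) (θ : ℝ),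
          (S.filter (fun x => x i ≤ θ)).Nonempty ∧
          (S.filter (fun x => ¬ x i ≤ θ)).Nonempty ∧
          P = {S.filter (fun x => x i ≤ θ), S.filter (fun x => ¬ x i ≤ θ)}} = ↑PartF := by
    ext P
    simp only [Set.mem_setOf_eq, hPartF, Finset.coe_image, Set.mem_image, Finset.mem_coe]
    constructor
    · rintro ⟨i, θ, h1, h2, rfl⟩
      refine ⟨S.filter (fun x => x i ≤ θ), ?_, ?_⟩
      · exact (memGood _).2 ⟨Finset.filter_subset _ _, h1, by rw [hcompl]; exact h2,
          i, θ, Or.inl rfl⟩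
      · rw [hcompl]
    · rintro ⟨A, hA, rfl⟩
      rcases (memGood A).1 hA with ⟨hsub, hne, hcne, i, θ, hA' | hA'⟩
      · refine ⟨i, θ, ?_, ?_, ?_⟩
        · rw [← hA']; exact hne
        · rw [← hcompl, ← hA']; exact hcne
        · rw [hA', hcompl]
      · refine ⟨i, θ, ?_, ?_, ?_⟩
        · have : S \ A = S.filter (fun x => x i ≤ θ) := by
            rw [hA', ← hcompl, Finset.sdiff_sdiff_eq_self (Finset.filter_subset _ _)]
          rw [← this]; exact hcne
        · rw [← hA']; exact hne
        · have : S \ A = S.filter (fun x => x i ≤ θ) := by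
            rw [hA', ← hcompl, Finset.sdiff_sdiff_eq_self (Finset.filter_subset _ _)]
          rw [this, hA', Finset.pair_comm]
    
  rw [hset, Set.ncard_coe_finset]
  -- pairwise disjointness of distinct partitions
  have key : ∀ A B : Finset (Fin ℓ → ℝ), A ⊆ S → B ⊆ S →
      ¬ Disjoint ({A, S \ A} : Finset (Finset (Fin ℓ → ℝ))) {B, S \ B} →
      ({A, S \ A} : Finset (Finset (Fin ℓ → ℝ))) = {B, S \ B} := by
    intro A B hA hB hnd
    rcases Finset.not_disjoint_iff.1 hnd with ⟨C, hC1, hC2⟩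
    simp only [Finset.mem_insert, Finset.mem_singleton] at hC1 hC2
    rcases hC1 with rfl | rfl
    · rcases hC2 with h | h
      · rw [h]
      · rw [h, Finset.sdiff_sdiff_eq_self hB, Finset.pair_comm]
    · rcases hC2 with h | h
      · rw [← h, Finset.sdiff_sdiff_eq_self hA]
        exact Finset.pair_comm A (S \ A)
      · have hAB : A = B := by
          rw [← Finset.sdiff_sdiff_eq_self hA, h, Finset.sdiff_sdiff_eq_self hB]
        rw [hAB]
  have hdisj : ∀ P ∈ PartF, ∀ Q ∈ PartF, P ≠ Q → Disjoint P Q := by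
    intro P hP Q hQ hne
    rcases Finset.mem_image.1 hP with ⟨A, hA, rfl⟩
    rcases Finset.mem_image.1 hQ with ⟨B, hB, rfl⟩
    by_contra hnd
    exact hne (key A B ((memGood A).1 hA).1 ((memGood B).1 hB).1 hnd)
  have hcard2 : ∀ P ∈ PartF, P.card = 2 := by
    intro P hP
    rcases Finset.mem_image.1 hP with ⟨A, hA, rfl⟩
    rcases (memGood A).1 hA with ⟨hsub, ⟨x, hx⟩, -, -⟩
    have hne : A ≠ S \ A := by
      intro h
      have := h ▸ hx
      exact (Finset.mem_sdiff.1 this).2 hx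
    exact Finset.card_pair hne
  have hBsub : PartF.biUnion id ⊆ Good := by
    intro A hA
    rcases Finset.mem_biUnion.1 hA with ⟨P, hP, hAP⟩
    rcases Finset.mem_image.1 hP with ⟨B, hB, rfl⟩
    simp only [id, Finset.mem_insert, Finset.mem_singleton] at hAP
    rcases hAP with rfl | rfl
    · exact hB
    · rcases (memGood B).1 hB with ⟨hsub, hne, hcne, i, θ, hB' | hB'⟩
      · refine (memGood _).2 ⟨Finset.sdiff_subset, hcne, ?_, i, θ, Or.inr ?_⟩
        · rwa [Finset.sdiff_sdiff_eq_self hsub]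
        · rw [hB', hcompl]
      · refine (memGood _).2 ⟨Finset.sdiff_subset, hcne, ?_, i, θ, Or.inl ?_⟩
        · rwa [Finset.sdiff_sdiff_eq_self hsub]
        · rw [hB', ← hcompl, Finset.sdiff_sdiff_eq_self (Finset.filter_subset _ _)]
  have step1 : 2 * PartF.card ≤ Good.card := by
    have h1 : (PartF.biUnion id).card = ∑ P ∈ PartF, P.card :=
      Finset.card_biUnion hdisj
    have h2 : ∑ P ∈ PartF, P.card = 2 * PartF.card := by
      rw [Finset.sum_congr rfl hcard2, Finset.sum_const, smul_eq_mul, mul_comm]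
    calc 2 * PartF.card = (PartF.biUnion id).card := by rw [h1, h2]
      _ ≤ Good.card := Finset.card_le_card hBsub
  -- now bound Good.card
  have cutEq : ∀ (i : Fin ℓ) (θ θ' : ℝ),
      (S.filter (fun x => x i ≤ θ)).card = (S.filter (fun x => x i ≤ θ')).card →
      S.filter (fun x => x i ≤ θ) = S.filter (fun x => x i ≤ θ') := by
    have mono : ∀ (i : Fin ℓ) (θ θ' : ℝ), θ ≤ θ' →
        S.filter (fun x => x i ≤ θ) ⊆ S.filter (fun x => x i ≤ θ') :=
      fun i θ θ' h => Finset.monotone_filter_right S (fun x _ hx => hx.trans h)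
    intro i θ θ' hc
    rcases le_total θ θ' with h | h
    · exact Finset.eq_of_subset_of_card_le (mono i θ θ' h) hc.ge
    · exact (Finset.eq_of_subset_of_card_le (mono i θ' θ h) hc.le).symm
  have cutEq' : ∀ (i : Fin ℓ) (θ θ' : ℝ),
      (S.filter (fun x => ¬ x i ≤ θ)).card = (S.filter (fun x => ¬ x i ≤ θ')).card →
      S.filter (fun x => ¬ x i ≤ θ) = S.filter (fun x => ¬ x i ≤ θ') := by
    have mono : ∀ (i : Fin ℓ) (θ θ' : ℝ), θ ≤ θ' →
        S.filter (fun x => ¬ x i ≤ θ') ⊆ S.filter (fun x => ¬ x i ≤ θ) :=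
      fun i θ θ' h => Finset.monotone_filter_right S (fun x _ hx hc => hx (hc.trans h))
    intro i θ θ' hc
    rcases le_total θ θ' with h | h
    · exact (Finset.eq_of_subset_of_card_le (mono i θ θ' h) hc.le).symm
    · exact Finset.eq_of_subset_of_card_le (mono i θ' θ h) hc.ge
  have perk : ∀ k, (Good.filter (fun A => A.card = k)).card ≤ min (2 * ℓ) (m.choose k) := by
    intro k
    refine le_min ?_ ?_
    · -- ≤ 2ℓ bound
      have h := card_le_of_rel_unique (Good.filter (fun A => A.card = k))
        (fun A (p : Fin ℓ × Bool) => ∃ θ : ℝ,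
          (p.2 = true ∧ A = S.filter (fun x => x p.1 ≤ θ)) ∨
          (p.2 = false ∧ A = S.filter (fun x => ¬ x p.1 ≤ θ)))
        ?_ ?_
      · calc (Good.filter (fun A => A.card = k)).card ≤ Fintype.card (Fin ℓ × Bool) := h
          _ = 2 * ℓ := by simp [mul_comm]
      · intro A hA
        rcases (memGood A).1 (Finset.mem_filter.1 hA).1 with ⟨-, -, -, i, θ, h | h⟩
        · exact ⟨(i, true), θ, Or.inl ⟨rfl, h⟩⟩
        · exact ⟨(i, false), θ, Or.inr ⟨rfl, h⟩⟩
      · intro A hA A' hA' p ⟨θ, hp⟩ ⟨θ', hp'⟩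
        have hk : A.card = k := (Finset.mem_filter.1 hA).2
        have hk' : A'.card = k := (Finset.mem_filter.1 hA').2
        rcases hp with ⟨hb, rfl⟩ | ⟨hb, rfl⟩ <;> rcases hp' with ⟨hb', rfl⟩ | ⟨hb', rfl⟩
        · exact cutEq _ _ _ (by rw [hk, hk'])
        · rw [hb] at hb'; exact absurd hb' (by simp)
        · rw [hb] at hb'; exact absurd hb' (by simp)
        · exact cutEq' _ _ _ (by rw [hk, hk'])
    · -- ≤ choose bound
      have : Good.filter (fun A => A.card = k) ⊆ S.powersetCard k := by
        intro A hA
        rcases Finset.mem_filter.1 hA with ⟨hA, hk⟩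
        exact Finset.mem_powersetCard.2 ⟨((memGood A).1 hA).1, hk⟩
      calc (Good.filter (fun A => A.card = k)).card ≤ (S.powersetCard k).card :=
            Finset.card_le_card this
        _ = m.choose k := by rw [Finset.card_powersetCard, hS]
  have hGoodsub : Good ⊆ (Finset.Icc 1 (m - 1)).biUnion
      (fun k => Good.filter (fun A => A.card = k)) := by
    intro A hA
    rcases (memGood A).1 hA with ⟨hsub, hne, hcne, -⟩
    refine Finset.mem_biUnion.2 ⟨A.card, ?_, Finset.mem_filter.2 ⟨hA, rfl⟩⟩
    rw [Finset.mem_Icc]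
    have h1 : (S \ A).card + A.card = m := by
      rw [Finset.card_sdiff_add_card_eq_card hsub, hS]
    have h2 : 1 ≤ A.card := hne.card_pos
    have h3 : 1 ≤ (S \ A).card := hcne.card_pos
    omega
  calc 2 * PartF.card ≤ Good.card := step1
    _ ≤ ((Finset.Icc 1 (m - 1)).biUnion (fun k => Good.filter (fun A => A.card = k))).card :=
        Finset.card_le_card hGoodsub
    _ ≤ ∑ k ∈ Finset.Icc 1 (m - 1), (Good.filter (fun A => A.card = k)).card :=
        Finset.card_biUnion_le
    _ ≤ ∑ k ∈ Finset.Icc 1 (m - 1), min (2 * ℓ) (m.choose k) :=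
        Finset.sum_le_sum (fun k _ => perk k)
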